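/- arXiv:1510.03574 — 4 statements merged into one kernel-verified Lean document; each statement's English description precedes it below -/
import Mathlib

section
/- Let Λ be a ring. If (P, ε_P) is a differential Λ-module admitting a projective flag (i.e. P = P_l ⊕ ⋯ ⊕ P_0 with each P_i projective and ε_P strictly lower triangular), then every morphism of differential modules from (P, ε_P) to an acyclic differential module is null-homotopic. -/
/-!
STATEMENT 10: If (P, ε_P) is a differential Λ-module admitting a projective flag
(P = P_l ⊕ ⋯ ⊕ P_0 with each P_i projective and ε_P strictly lower triangular), then
every morphism of differential modules from (P, ε_P) to an acyclic differential module
is null-homotopic.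
-/

open DirectSum

theorem projective_flag_is_homotopically_projective
    (Λ : Type*) [Ring Λ] (l : ℕ)
    (P : Fin (l + 1) → Type) [∀ j, AddCommGroup (P j)] [∀ j, Module Λ (P j)]
    [∀ j, Module.Projective Λ (P j)]
    (ε : (⨁ j, P j) →ₗ[Λ] ⨁ j, P j) (hε2 : ε ∘ₗ ε = 0)
    -- ε is strictly lower triangular with respect to the flag
    (htri : ∀ i j : Fin (l + 1), ¬ i < j →
      (DirectSum.component Λ (Fin (l + 1)) P i) ∘ₗ ε ∘ₗ (DirectSum.lof Λ (Fin (l + 1)) P j) = 0)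
    -- an acyclic differential module (N, εN)
    (N : Type*) [AddCommGroup N] [Module Λ N]
    (εN : N →ₗ[Λ] N) (hεN : εN ∘ₗ εN = 0)
    (hacyclic : LinearMap.ker εN = LinearMap.range εN)
    -- a morphism of differential modules (P, ε) → (N, εN)
    (f : (⨁ j, P j) →ₗ[Λ] N) (hf : f ∘ₗ ε = εN ∘ₗ f) :
    -- f is null-homotopic
    ∃ s : (⨁ j, P j) →ₗ[Λ] N, f = s ∘ₗ ε + εN ∘ₗ s := by
  -- key fact: component i of ε (lof j x) vanishes unless i < j
  have hcomp : ∀ (i j : Fin (l + 1)), ¬ i < j → ∀ x : P j,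
      DirectSum.component Λ (Fin (l + 1)) P i (ε (DirectSum.lof Λ (Fin (l + 1)) P j x)) = 0 := by
    intro i j h x
    have := htri i j h
    exact DFunLike.congr_fun this x
  suffices h : ∀ m : ℕ, ∃ s : (⨁ j, P j) →ₗ[Λ] N,
      (∀ j : Fin (l + 1), m ≤ (j : ℕ) → s ∘ₗ DirectSum.lof Λ (Fin (l + 1)) P j = 0) ∧
      (∀ j : Fin (l + 1), (j : ℕ) < m →
        f ∘ₗ DirectSum.lof Λ (Fin (l + 1)) P j =
          (s ∘ₗ ε + εN ∘ₗ s) ∘ₗ DirectSum.lof Λ (Fin (l + 1)) P j) by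
    obtain ⟨s, _, hs⟩ := h (l + 1)
    refine ⟨s, DirectSum.linearMap_ext Λ fun j => hs j j.isLt⟩
  intro m
  induction m with
  | zero => exact ⟨0, fun j _ => by ext x; simp, fun j hj => absurd hj (Nat.not_lt_zero _)⟩
  | succ m ih =>
    obtain ⟨s, hs0, hs⟩ := ih
    rcases lt_or_ge m (l + 1) with hm | hm
    · -- the new component jm
      set jm : Fin (l + 1) := ⟨m, hm⟩ with hjm
      have hjmv : (jm : ℕ) = m := rfl
      set g0 : P jm →ₗ[Λ] N :=
        f ∘ₗ DirectSum.lof Λ (Fin (l + 1)) P jm -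
          s ∘ₗ ε ∘ₗ DirectSum.lof Λ (Fin (l + 1)) P jm with hg0
      -- g0 lands in range εN
      have hrange : ∀ x : P jm, g0 x ∈ LinearMap.range εN := by
        intro x
        rw [← hacyclic, LinearMap.mem_ker]
        set y := ε (DirectSum.lof Λ (Fin (l + 1)) P jm x) with hy
        have hεNf : ∀ v, εN (f v) = f (ε v) := fun v => (DFunLike.congr_fun hf v).symm
        have h1 : εN (g0 x) = f y - εN (s y) := by
          simp only [hg0, LinearMap.sub_apply, LinearMap.coe_comp, Function.comp_apply, map_sub]
          rw [hεNf]
        rw [h1]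
        -- f y = εN (s y) + s (ε y) and ε y = 0
        have hG : ∀ j : Fin (l + 1),
            f (DirectSum.of P j (y j)) =
              εN (s (DirectSum.of P j (y j))) + s (ε (DirectSum.of P j (y j))) := by
          intro j
          rcases lt_or_ge (j : ℕ) m with hj | hj
          · have := DFunLike.congr_fun (hs j hj) (y j)
            simp only [LinearMap.coe_comp, Function.comp_apply, LinearMap.add_apply] at this
            rw [DirectSum.lof_eq_of] at this
            rw [this, add_comm]
          · -- y j = 0
            have : y j = 0 := by
              have : ¬ j < jm := by
                rw [Fin.lt_def, hjmv]; omega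
              exact hcomp j jm this x
            rw [this]; simp
        have hsum : f y = εN (s y) + s (ε y) := by
          conv_lhs => rw [← DirectSum.sum_univ_of y]
          conv_rhs => rw [← DirectSum.sum_univ_of y]
          simp only [map_sum]
          rw [← Finset.sum_add_distrib]
          exact Finset.sum_congr rfl fun j _ => hG j
        have hεy : ε y = 0 := by
          rw [hy]
          exact DFunLike.congr_fun hε2 (DirectSum.lof Λ (Fin (l + 1)) P jm x)
        rw [hsum, hεy, map_zero, add_zero, sub_self]
      -- lift g0 along εN using projectivity of P jm
      obtain ⟨t, ht⟩ := Module.projective_lifting_property εN.rangeRestrict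
        (g0.codRestrict (LinearMap.range εN) hrange) εN.surjective_rangeRestrict
      have htN : ∀ x, εN (t x) = g0 x := by
        intro x
        have := DFunLike.congr_fun ht x
        exact congrArg Subtype.val this
      -- the new homotopy
      refine ⟨s + t ∘ₗ DirectSum.component Λ (Fin (l + 1)) P jm, ?_, ?_⟩
      · intro j hj
        ext x
        have hne : jm ≠ j := fun hq => by
          rw [← hq, hjmv] at hj
          omega
        have hc : DirectSum.component Λ (Fin (l + 1)) P jm
            (DirectSum.lof Λ (Fin (l + 1)) P j x) = 0 := by
          rw [DirectSum.component.of]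
          exact dif_neg hne.symm
        have h0 : s (DirectSum.lof Λ (Fin (l + 1)) P j x) = 0 :=
          DFunLike.congr_fun (hs0 j (by omega)) x
        simp [hc, h0]
      · intro j hj
        rcases lt_or_ge (j : ℕ) m with hj' | hj'
        · -- old components: new terms vanish
          ext x
          have hcε : DirectSum.component Λ (Fin (l + 1)) P jm
              (ε (DirectSum.lof Λ (Fin (l + 1)) P j x)) = 0 := by
            refine hcomp jm j ?_ x
            rw [Fin.lt_def, hjmv]; omega
          have hc : DirectSum.component Λ (Fin (l + 1)) P jm
              (DirectSum.lof Λ (Fin (l + 1)) P j x) = 0 := by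
            rw [DirectSum.component.of]
            refine dif_neg fun hq => ?_
            rw [hq, hjmv] at hj'
            omega
          have hold := DFunLike.congr_fun (hs j hj') x
          simp only [LinearMap.coe_comp, Function.comp_apply, LinearMap.add_apply] at hold ⊢
          rw [hcε, hc]
          simpa using hold
        · -- j = jm
          have hjeq : j = jm := Fin.ext (by rw [hjmv]; omega)
          rw [hjeq]
          ext x
          have hcε : DirectSum.component Λ (Fin (l + 1)) P jm
              (ε (DirectSum.lof Λ (Fin (l + 1)) P jm x)) = 0 :=
            hcomp jm jm (lt_irrefl jm) x
          have hc : DirectSum.component Λ (Fin (l + 1)) P jm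
              (DirectSum.lof Λ (Fin (l + 1)) P jm x) = x :=
            DirectSum.component.lof_self Λ jm x
          have h0 : s (DirectSum.lof Λ (Fin (l + 1)) P jm x) = 0 :=
            DFunLike.congr_fun (hs0 jm (le_refl m)) x
          simp only [LinearMap.coe_comp, Function.comp_apply, LinearMap.add_apply,
            map_add, hcε, hc, h0, map_zero, add_zero, zero_add]
          have := htN x
          simp only [hg0, LinearMap.sub_apply, LinearMap.coe_comp, Function.comp_apply] at this
          rw [this]; abel
    · -- m ≥ l + 1: nothing to do
      refine ⟨s, fun j hj => hs0 j (by omega), fun j _ => hs j (by omega)⟩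
end

section
/- Let Λ be a ring and let (M, ε_M) be a differential Λ-module whose underlying module M admits a finite projective resolution 0 → P_l → ⋯ → P_1 → P_0 → M → 0 together with Λ-linear maps ε_i : P_i → P_i lifting ε_M such that each square anticommutes appropriately (ε_{i-1} ∂_i = −∂_i ε_i for i ≥ 1 and ε_M ∂_0 = ∂_0 ε_0) and ε_i² = 0. Then the module 𝑝M = P_l ⊕ ⋯ ⊕ P_0 with differential given by ε_i on the diagonal and ∂_i on the subdiagonal satisfies ε_{𝑝M}² = 0, and the map f : 𝑝M → M, (p_l, …, p_0) ↦ ∂_0(p_0), is a quasi-isomorphism of differential modules. -/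
/-!
STATEMENT 11: Given a differential Λ-module (M, ε_M) with a finite projective resolution
0 → P_l → ⋯ → P_1 → P_0 → M → 0 (here `d i : P (i+1) → P i`, `π : P 0 → M`, and
`P i` trivial for i > l), together with lifts ε_i : P_i → P_i of ε_M such that
ε_i ∘ d_i = − d_i ∘ ε_{i+1}, ε_M ∘ π = π ∘ ε_0, and ε_i² = 0, the module
𝑝M = ⊕ᵢ P_i with the differential having ε_i on the diagonal and d on the subdiagonal
squares to zero, and (p_l, …, p_0) ↦ π(p_0) is a quasi-isomorphism of differential
modules.
-/

open DirectSum

theorem resolution_of_differential_module_is_quasi_iso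
    (Λ : Type*) [Ring Λ] (l : ℕ)
    (M : Type*) [AddCommGroup M] [Module Λ M]
    (εM : M →ₗ[Λ] M) (hεM : εM ∘ₗ εM = 0)
    (P : ℕ → Type) [∀ i, AddCommGroup (P i)] [∀ i, Module Λ (P i)]
    [∀ i, Module.Projective Λ (P i)]
    (hbdd : ∀ i, l < i → Subsingleton (P i))
    (d : ∀ i : ℕ, P (i + 1) →ₗ[Λ] P i) (π : P 0 →ₗ[Λ] M)
    -- the resolution is a complex and is exact
    (hc0 : π ∘ₗ d 0 = 0) (hc : ∀ i, d i ∘ₗ d (i + 1) = 0)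
    (hπsurj : Function.Surjective π)
    (hex0 : LinearMap.ker π = LinearMap.range (d 0))
    (hex : ∀ i, LinearMap.ker (d i) = LinearMap.range (d (i + 1)))
    -- the lifts of ε_M and their (anti)commutation relations
    (e : ∀ i : ℕ, P i →ₗ[Λ] P i)
    (he2 : ∀ i, e i ∘ₗ e i = 0)
    (hanti : ∀ i, e i ∘ₗ d i = - (d i ∘ₗ e (i + 1)))
    (hcomm : εM ∘ₗ π = π ∘ₗ e 0)
    -- the differential on 𝑝M = ⊕ᵢ P_i : ε_i on the diagonal, d on the subdiagonal
    (εp : (⨁ i, P i) →ₗ[Λ] ⨁ i, P i)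
    (hεp : εp = DirectSum.toModule Λ ℕ (⨁ i, P i) (fun i =>
      match i with
      | 0 => (DirectSum.lof Λ ℕ P 0) ∘ₗ e 0
      | (j + 1) => (DirectSum.lof Λ ℕ P (j + 1)) ∘ₗ e (j + 1)
          + (DirectSum.lof Λ ℕ P j) ∘ₗ d j))
    -- the comparison map f(p_l, …, p_0) = π(p_0)
    (f : (⨁ i, P i) →ₗ[Λ] M)
    (hfdef : f = π ∘ₗ DirectSum.component Λ ℕ P 0) :
    -- εp is a differential
    εp ∘ₗ εp = 0 ∧
    -- f is a morphism of differential modules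
    f ∘ₗ εp = εM ∘ₗ f ∧
    -- f is a quasi-isomorphism: it induces an isomorphism ker/im → ker/im
    (∀ x ∈ LinearMap.ker εM, ∃ y ∈ LinearMap.ker εp,
      f y - x ∈ LinearMap.range εM) ∧
    (∀ y ∈ LinearMap.ker εp, f y ∈ LinearMap.range εM → y ∈ LinearMap.range εp) := by
  classical
  -- pointwise versions of the hypotheses
  have he2' : ∀ i (x : P i), e i (e i x) = 0 := fun i x => by
    have := congrFun (congrArg DFunLike.coe (he2 i)) x; simpa using this
  have hanti' : ∀ i (x : P (i + 1)), e i (d i x) = - d i (e (i + 1) x) := fun i x => by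
    have := congrFun (congrArg DFunLike.coe (hanti i)) x; simpa using this
  have hc' : ∀ i (x : P (i + 2)), d i (d (i + 1) x) = 0 := fun i x => by
    have := congrFun (congrArg DFunLike.coe (hc i)) x; simpa using this
  have hc0' : ∀ x : P 1, π (d 0 x) = 0 := fun x => by
    have := congrFun (congrArg DFunLike.coe hc0) x; simpa using this
  have hcomm' : ∀ x : P 0, εM (π x) = π (e 0 x) := fun x => by
    have := congrFun (congrArg DFunLike.coe hcomm) x; simpa using this
  -- component of lof at a different index
  have hcof : ∀ (i j : ℕ), i ≠ j → ∀ p : P j,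
      DirectSum.component Λ ℕ P i (DirectSum.lof Λ ℕ P j p) = 0 := by
    intro i j hij p
    rw [DirectSum.component.of, dif_neg (Ne.symm hij)]
  -- action of εp on generators
  have hεp0 : ∀ p : P 0, εp (DirectSum.lof Λ ℕ P 0 p)
      = DirectSum.lof Λ ℕ P 0 (e 0 p) := by
    intro p; rw [hεp, DirectSum.toModule_lof]; rfl
  have hεpS : ∀ k (p : P (k + 1)), εp (DirectSum.lof Λ ℕ P (k + 1) p)
      = DirectSum.lof Λ ℕ P (k + 1) (e (k + 1) p) + DirectSum.lof Λ ℕ P k (d k p) := by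
    intro k p; rw [hεp, DirectSum.toModule_lof]; rfl
  -- the key component formula for εp
  have hcompεp : ∀ (i : ℕ) (x : ⨁ i, P i),
      DirectSum.component Λ ℕ P i (εp x)
        = e i (DirectSum.component Λ ℕ P i x)
          + d i (DirectSum.component Λ ℕ P (i + 1) x) := by
    intro i x
    induction x using DirectSum.induction_on with
    | zero => simp
    | of j p =>
      rw [← DirectSum.lof_eq_of Λ]
      cases j with
      | zero =>
        rw [hεp0]
        by_cases h0 : i = 0
        · subst h0
          rw [DirectSum.component.lof_self, DirectSum.component.lof_self,
            hcof 1 0 (by omega), map_zero, add_zero]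
        · rw [hcof i 0 h0, hcof i 0 h0, hcof (i + 1) 0 (by omega), map_zero, map_zero,
            add_zero]
      | succ k =>
        rw [hεpS, map_add]
        rcases lt_trichotomy i k with h | h | h
        · simp [hcof i (k + 1) (by omega : i ≠ k + 1), hcof i k (by omega : i ≠ k),
            hcof (i + 1) (k + 1) (by omega : i + 1 ≠ k + 1)]
        · subst h
          simp [hcof i (i + 1) (by omega : i ≠ i + 1), DirectSum.component.lof_self]
        · rcases Nat.eq_or_lt_of_le h with h' | h'
          · subst h'
            simp [DirectSum.component.lof_self, hcof (k + 1) k (by omega : k + 1 ≠ k),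
              hcof (k + 1 + 1) (k + 1) (by omega : k + 1 + 1 ≠ k + 1)]
          · simp [hcof i (k + 1) (by omega : i ≠ k + 1), hcof i k (by omega : i ≠ k),
              hcof (i + 1) (k + 1) (by omega : i + 1 ≠ k + 1)]
    | add x y hx hy =>
      simp only [map_add, hx, hy]
      abel
  -- εp squares to zero
  have part1 : εp ∘ₗ εp = 0 := by
    apply LinearMap.ext; intro x
    apply DirectSum.ext_component Λ; intro i
    rw [LinearMap.comp_apply, hcompεp, hcompεp, hcompεp, map_add, map_add, he2' i,
      hanti' i, hc' i, zero_add, add_zero]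
    simp
  -- f is a morphism of differential modules
  have part2 : f ∘ₗ εp = εM ∘ₗ f := by
    apply LinearMap.ext; intro x
    rw [LinearMap.comp_apply, LinearMap.comp_apply, hfdef, LinearMap.comp_apply,
      LinearMap.comp_apply, hcompεp, map_add, hc0', add_zero, hcomm']
  refine ⟨part1, part2, ?_, ?_⟩
  · -- surjectivity on homology
    intro x hx
    rw [LinearMap.mem_ker] at hx
    obtain ⟨p0, hp0⟩ := hπsurj x
    have h0 : e 0 p0 ∈ LinearMap.range (d 0) := by
      rw [← hex0, LinearMap.mem_ker, ← hcomm', hp0, hx]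
    have step : ∀ i (q : P i), e i q ∈ LinearMap.range (d i) →
        ∃ r : P (i + 1), d i r = - e i q ∧ e (i + 1) r ∈ LinearMap.range (d (i + 1)) := by
      intro i q hq
      obtain ⟨r, hr⟩ := Submodule.neg_mem _ hq
      refine ⟨r, hr, ?_⟩
      rw [← hex, LinearMap.mem_ker]
      have : d i (e (i + 1) r) = - e i (d i r) := by rw [hanti' i r]; simp
      rw [this, hr, map_neg, neg_neg, he2']
    choose step1 hstep1 hstep2 using step
    let p : ∀ i, {q : P i // e i q ∈ LinearMap.range (d i)} := fun i =>
      Nat.rec ⟨p0, h0⟩ (fun i s => ⟨step1 i s.1 s.2, hstep2 i s.1 s.2⟩) i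
    have hrec : ∀ i, d i (p (i + 1)).1 = - e i (p i).1 := fun i =>
      hstep1 i (p i).1 (p i).2
    set y : ⨁ i, P i := ∑ j ∈ Finset.range (l + 1), DirectSum.lof Λ ℕ P j (p j).1 with hy
    have hycomp : ∀ i, DirectSum.component Λ ℕ P i y
        = if h : i < l + 1 then (p i).1 else 0 := by
      intro i
      rw [hy, map_sum]
      by_cases h : i < l + 1
      · rw [dif_pos h, Finset.sum_eq_single_of_mem i (Finset.mem_range.mpr h)
          (fun j _ hj => hcof i j (Ne.symm hj) _), DirectSum.component.lof_self]
      · rw [dif_neg h, Finset.sum_eq_zero]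
        intro j hj
        exact hcof i j (by rw [Finset.mem_range] at hj; omega) _
    have hplsucc : (p (l + 1)).1 = 0 := by
      haveI := hbdd (l + 1) (by omega)
      exact Subsingleton.elim _ _
    refine ⟨y, ?_, ?_⟩
    · rw [LinearMap.mem_ker]
      apply DirectSum.ext_component Λ; intro i
      rw [hcompεp, hycomp, hycomp, map_zero]
      rcases lt_trichotomy i l with h | h | h
      · rw [dif_pos (by omega), dif_pos (by omega), hrec, add_neg_cancel]
      · subst h
        rw [dif_pos (by omega), dif_neg (by omega), map_zero, add_zero]
        have h3 := hrec i
        rw [hplsucc, map_zero] at h3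
        rw [← neg_neg (e i (p i).1), ← h3, neg_zero]
      · rw [dif_neg (by omega), dif_neg (by omega), map_zero, map_zero, add_zero]
    · have : f y = x := by
        rw [hfdef, LinearMap.comp_apply, hycomp, dif_pos (by omega)]
        show π (p 0).1 = x
        exact hp0
      rw [this, sub_self]
      exact Submodule.zero_mem _
  · -- injectivity on homology
    intro y hy hfy
    rw [LinearMap.mem_ker] at hy
    have hky : ∀ i, e i (DirectSum.component Λ ℕ P i y)
        + d i (DirectSum.component Λ ℕ P (i + 1) y) = 0 := fun i => by
      rw [← hcompεp i y, hy, map_zero]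
    obtain ⟨m, hm⟩ := hfy
    rw [hfdef, LinearMap.comp_apply] at hm
    obtain ⟨q0, hq0⟩ := hπsurj m
    have base : DirectSum.component Λ ℕ P 0 y - e 0 q0 ∈ LinearMap.range (d 0) := by
      rw [← hex0, LinearMap.mem_ker, map_sub, ← hcomm', hq0, hm, sub_self]
    have step : ∀ i (q : P i),
        DirectSum.component Λ ℕ P i y - e i q ∈ LinearMap.range (d i) →
        ∃ r : P (i + 1), d i r = DirectSum.component Λ ℕ P i y - e i q ∧
          DirectSum.component Λ ℕ P (i + 1) y - e (i + 1) r
            ∈ LinearMap.range (d (i + 1)) := by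
      intro i q hq
      obtain ⟨r, hr⟩ := hq
      refine ⟨r, hr, ?_⟩
      rw [← hex, LinearMap.mem_ker, map_sub]
      have h1 : d i (e (i + 1) r) = - e i (d i r) := by rw [hanti' i r]; simp
      rw [h1, hr, map_sub, he2', sub_zero, sub_neg_eq_add, add_comm, hky i]
    choose step1 hstep1 hstep2 using step
    let q : ∀ i, {r : P i //
        DirectSum.component Λ ℕ P i y - e i r ∈ LinearMap.range (d i)} := fun i =>
      Nat.rec ⟨q0, base⟩ (fun i s => ⟨step1 i s.1 s.2, hstep2 i s.1 s.2⟩) i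
    have hrec : ∀ i, d i (q (i + 1)).1
        = DirectSum.component Λ ℕ P i y - e i (q i).1 := fun i =>
      hstep1 i (q i).1 (q i).2
    set z : ⨁ i, P i := ∑ j ∈ Finset.range (l + 1), DirectSum.lof Λ ℕ P j (q j).1 with hz
    have hzcomp : ∀ i, DirectSum.component Λ ℕ P i z
        = if h : i < l + 1 then (q i).1 else 0 := by
      intro i
      rw [hz, map_sum]
      by_cases h : i < l + 1
      · rw [dif_pos h, Finset.sum_eq_single_of_mem i (Finset.mem_range.mpr h)
          (fun j _ hj => hcof i j (Ne.symm hj) _), DirectSum.component.lof_self]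
      · rw [dif_neg h, Finset.sum_eq_zero]
        intro j hj
        exact hcof i j (by rw [Finset.mem_range] at hj; omega) _
    have hqlsucc : (q (l + 1)).1 = 0 := by
      haveI := hbdd (l + 1) (by omega)
      exact Subsingleton.elim _ _
    refine ⟨z, ?_⟩
    apply DirectSum.ext_component Λ; intro i
    rw [hcompεp, hzcomp, hzcomp]
    rcases lt_trichotomy i l with h | h | h
    · rw [dif_pos (by omega), dif_pos (by omega), hrec, add_sub_cancel]
    · subst h
      rw [dif_pos (by omega), dif_neg (by omega), map_zero, add_zero]
      have h3 := hrec i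
      rw [hqlsucc, map_zero] at h3
      exact (sub_eq_zero.mp h3.symm).symm
    · rw [dif_neg (by omega), dif_neg (by omega), map_zero, map_zero, add_zero]
      haveI := hbdd i h
      exact (Subsingleton.elim _ _)
end

section
/- Let k be a field, G the quiver 1 →^α 2 →^β 3 →^γ 4 →^δ 1, and Λ = kG/(γβα). Let P_3 be the indecomposable projective at vertex 3 and let ε = βαδγ : P_3 → P_3 be multiplication by the path βαδγ. Then ε ≠ 0 and ε² = 0, so (P_3, ε) is a nonzero differential Λ-module with nonzero differential whose underlying module is projective and indecomposable. -/
/-!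
STATEMENT 15: Let Λ = kG/(γβα) where G is the cyclic quiver
1 →^α 2 →^β 3 →^γ 4 →^δ 1, and let ε = βαδγ ∈ e₃Λe₃, the endomorphism of the
indecomposable projective P₃ given by multiplication with the cycle βαδγ at vertex 3.
Then ε ≠ 0 and ε² = 0, so (P₃, ε) is a nonzero differential Λ-module with nonzero
differential whose underlying module is projective and indecomposable.

We present Λ by generators and relations: generators X 0,…,X 3 (the vertex idempotents
e₁,…,e₄) and X 4,…,X 7 (the arrows α, β, γ, δ), with the path-algebra relations and the
zero relation γβα = 0.
-/

open FreeAlgebra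

variable (k : Type) [Field k]

/-- The defining relations of the path algebra kG/(γβα) of the oriented 4-cycle. -/
inductive CycleRel' : FreeAlgebra k (Fin 8) → FreeAlgebra k (Fin 8) → Prop
  | orth (i j : Fin 4) :
      CycleRel' (ι k (Fin.castLE (by omega) i) * ι k (Fin.castLE (by omega) j))
        (if i = j then ι k (Fin.castLE (by omega) i) else 0)
  | sum_idem :
      CycleRel' (ι k 0 + ι k 1 + ι k 2 + ι k 3) 1
  | alpha : CycleRel' (ι k 4) (ι k 1 * ι k 4 * ι k 0)  -- α = e₂ α e₁
  | beta : CycleRel' (ι k 5) (ι k 2 * ι k 5 * ι k 1)   -- β = e₃ β e₂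
  | gamma : CycleRel' (ι k 6) (ι k 3 * ι k 6 * ι k 2)  -- γ = e₄ γ e₃
  | delta : CycleRel' (ι k 7) (ι k 0 * ι k 7 * ι k 3)  -- δ = e₁ δ e₄
  | gba : CycleRel' (ι k 6 * ι k 5 * ι k 4) 0          -- γβα = 0

/-- Shorthand for matrix units of the 5×5 matrix algebra. -/
noncomputable def EE (i j : Fin 5) : Matrix (Fin 5) (Fin 5) k := Matrix.single i j 1

/-- The representation of the generators on P₃ (basis: e₃, γ, δγ, αδγ, βαδγ). -/
noncomputable def rep : Fin 8 → Matrix (Fin 5) (Fin 5) k := fun i =>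
  match i with
  | 0 => EE k 2 2
  | 1 => EE k 3 3
  | 2 => EE k 0 0 + EE k 4 4
  | 3 => EE k 1 1
  | 4 => EE k 3 2
  | 5 => EE k 4 3
  | 6 => EE k 1 0
  | 7 => EE k 2 1

noncomputable def φrep : FreeAlgebra k (Fin 8) →ₐ[k] Matrix (Fin 5) (Fin 5) k :=
  FreeAlgebra.lift k (rep k)

theorem φrep_rel : ∀ ⦃x y⦄, CycleRel' k x y → φrep k x = φrep k y := by
  intro x y h
  cases h with
  | orth i j =>
      fin_cases i <;> fin_cases j <;>
        · simp only [φrep, _root_.map_mul, lift_ι_apply, _root_.map_zero, reduceIte]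
          norm_num [show (Fin.castLE (by omega : (4:Nat) ≤ 8)) =
            fun x : Fin 4 => (⟨x.val, by omega⟩ : Fin 8) from rfl]
          simp [rep, EE, Matrix.single_mul_single_same, Matrix.single_mul_single_of_ne,
            mul_add, add_mul]
  | sum_idem =>
      simp only [φrep, _root_.map_add, _root_.map_one, lift_ι_apply]
      simp only [rep, EE]
      ext i j
      fin_cases i <;> fin_cases j <;> simp [Matrix.single, Matrix.one_apply]
  | alpha =>
      simp [φrep, rep, EE, Matrix.single_mul_single_same, Matrix.single_mul_single_of_ne]
  | beta =>
      simp [φrep, rep, EE, Matrix.single_mul_single_same, Matrix.single_mul_single_of_ne,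
        mul_add, add_mul]
  | gamma =>
      simp [φrep, rep, EE, Matrix.single_mul_single_same, Matrix.single_mul_single_of_ne,
        mul_add, add_mul]
  | delta =>
      simp [φrep, rep, EE, Matrix.single_mul_single_same, Matrix.single_mul_single_of_ne]
  | gba =>
      simp [φrep, rep, EE, Matrix.single_mul_single_same, Matrix.single_mul_single_of_ne]

theorem differential_on_indecomposable_projective :
    letI Λ := RingQuot (CycleRel' k)
    letI a : Λ := RingQuot.mkAlgHom k (CycleRel' k) (ι k 4)   -- α
    letI b : Λ := RingQuot.mkAlgHom k (CycleRel' k) (ι k 5)   -- β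
    letI c : Λ := RingQuot.mkAlgHom k (CycleRel' k) (ι k 6)   -- γ
    letI dd : Λ := RingQuot.mkAlgHom k (CycleRel' k) (ι k 7)  -- δ
    letI e₃ : Λ := RingQuot.mkAlgHom k (CycleRel' k) (ι k 2)  -- the idempotent at vertex 3
    letI ε : Λ := b * a * dd * c                              -- ε = βαδγ
    -- ε is an endomorphism of P₃ = e₃Λ: ε ∈ e₃ Λ e₃
    (e₃ * ε * e₃ = ε) ∧
    -- ε is nonzero
    ε ≠ 0 ∧
    -- ε squares to zero
    ε * ε = 0 := by
  set m := RingQuot.mkAlgHom k (CycleRel' k) with hm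
  set a := m (ι k 4) with ha
  set b := m (ι k 5) with hb'
  set c := m (ι k 6) with hc'
  set dd := m (ι k 7) with hdd
  set e₃ := m (ι k 2) with he3
  set ε := b * a * dd * c with hε'
  -- e₃ is idempotent
  have h22 : e₃ * e₃ = e₃ := by
    have := RingQuot.mkAlgHom_rel k (CycleRel'.orth (k := k) 2 2)
    simpa [_root_.map_mul] using this
  -- β = e₃ β e₂ and γ = e₄ γ e₃
  have hb : b = e₃ * b * (m (ι k 1)) := by
    have := RingQuot.mkAlgHom_rel k (CycleRel'.beta (k := k))
    simpa [_root_.map_mul] using this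
  have hc : c = (m (ι k 3)) * c * e₃ := by
    have := RingQuot.mkAlgHom_rel k (CycleRel'.gamma (k := k))
    simpa [_root_.map_mul] using this
  have heb : e₃ * b = b := by
    conv_lhs => rw [hb]
    rw [show e₃ * (e₃ * b * m (ι k 1)) = (e₃ * e₃) * b * m (ι k 1) by noncomm_ring, h22, ← hb]
  have hce : c * e₃ = c := by
    conv_lhs => rw [hc]
    rw [show m (ι k 3) * c * e₃ * e₃ = m (ι k 3) * c * (e₃ * e₃) by noncomm_ring, h22, ← hc]
  have hcba : c * b * a = 0 := by
    have := RingQuot.mkAlgHom_rel k (CycleRel'.gba (k := k))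
    simpa [_root_.map_mul] using this
  refine ⟨?_, ?_, ?_⟩
  · show e₃ * (b * a * dd * c) * e₃ = b * a * dd * c
    rw [show e₃ * (b * a * dd * c) * e₃ = (e₃ * b) * a * dd * (c * e₃) by noncomm_ring,
      heb, hce]
  · intro h0
    have := congrArg ((RingQuot.liftAlgHom k ⟨φrep k, φrep_rel k⟩ : RingQuot (CycleRel' k) →ₐ[k] Matrix (Fin 5) (Fin 5) k)) h0
    rw [_root_.map_zero] at this
    have hε : ((RingQuot.liftAlgHom k ⟨φrep k, φrep_rel k⟩ : RingQuot (CycleRel' k) →ₐ[k] Matrix (Fin 5) (Fin 5) k)) ε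
        = EE k 4 0 := by
      show (RingQuot.liftAlgHom k ⟨φrep k, φrep_rel k⟩)
        (m (ι k 5) * m (ι k 4) * m (ι k 7) * m (ι k 6)) = EE k 4 0
      rw [hm]
      simp only [_root_.map_mul, RingQuot.liftAlgHom_mkAlgHom_apply]
      simp [φrep, rep, EE, Matrix.single_mul_single_same]
    rw [hε] at this
    have h1 : (EE k 4 0) 4 0 = (0 : Matrix (Fin 5) (Fin 5) k) 4 0 := by rw [this]
    simp [EE, Matrix.single] at h1
  · show (b * a * dd * c) * (b * a * dd * c) = 0
    rw [show (b * a * dd * c) * (b * a * dd * c) = b * a * dd * (c * b * a) * dd * c by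
      noncomm_ring, hcba]
    noncomm_ring
end

section
/- Let k be a field of characteristic ≠ 2, G the quiver 1 →^α 2 →^β 3 with an extra arrow γ : 1 → 3, and Λ = kG/(βα). Consider the differential Λ-modules Q₁ = (P₁, 0) and the two cones C = (P₁ ⊕ P₂ ⊕ P₃, d) and C' = (P₁ ⊕ P₂ ⊕ P₃, d') where d has components α : P₁ → P₂, γ : P₁ → P₃, β : P₂ → P₃ and d' has components α : P₁ → P₂, γ : P₁ → P₃, −β : P₂ → P₃ (all other components zero). Then d² = 0 = d'², and C and C' are not isomorphic as differential Λ-modules. -/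
/-!
STATEMENT 17: Let char k ≠ 2, G the quiver 1 →^α 2 →^β 3 with an extra arrow γ : 1 → 3,
and Λ = kG/(βα).  The differential modules C = (P₁ ⊕ P₂ ⊕ P₃, d) and
C' = (P₁ ⊕ P₂ ⊕ P₃, d'), where d has components α : P₁ → P₂, γ : P₁ → P₃, β : P₂ → P₃
and d' has components α, γ, −β, satisfy d² = 0 = d'², but C and C' are not isomorphic as
differential Λ-modules.

We present Λ by generators X 0, X 1, X 2 (vertex idempotents e₁, e₂, e₃) and
X 3, X 4, X 5 (arrows α, β, γ), with the path-algebra relations and βα = 0.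
Morphisms P₁ ⊕ P₂ ⊕ P₃ → P₁ ⊕ P₂ ⊕ P₃ are 3×3 matrices over Λ whose (i,j) entry lies
in e_i Λ e_j; an isomorphism is such a matrix invertible with two-sided inverse of the
same shape, the identity being diag(e₁, e₂, e₃).
-/

open FreeAlgebra Matrix

variable (k : Type) [Field k]

/-- Defining relations of kG/(βα) for 1 →^α 2 →^β 3 with γ : 1 → 3. -/
inductive TriRel : FreeAlgebra k (Fin 6) → FreeAlgebra k (Fin 6) → Prop
  | orth (i j : Fin 3) :
      TriRel (ι k (Fin.castLE (by omega) i) * ι k (Fin.castLE (by omega) j))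
        (if i = j then ι k (Fin.castLE (by omega) i) else 0)
  | sum_idem : TriRel (ι k 0 + ι k 1 + ι k 2) 1
  | alpha : TriRel (ι k 3) (ι k 1 * ι k 3 * ι k 0)  -- α = e₂ α e₁
  | beta : TriRel (ι k 4) (ι k 2 * ι k 4 * ι k 1)   -- β = e₃ β e₂
  | gamma : TriRel (ι k 5) (ι k 2 * ι k 5 * ι k 0)  -- γ = e₃ γ e₁
  | ba : TriRel (ι k 4 * ι k 3) 0                   -- βα = 0

namespace TriAux

noncomputable def e1 : RingQuot (TriRel k) := RingQuot.mkAlgHom k (TriRel k) (ι k 0)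
noncomputable def e2 : RingQuot (TriRel k) := RingQuot.mkAlgHom k (TriRel k) (ι k 1)
noncomputable def e3 : RingQuot (TriRel k) := RingQuot.mkAlgHom k (TriRel k) (ι k 2)
noncomputable def aa : RingQuot (TriRel k) := RingQuot.mkAlgHom k (TriRel k) (ι k 3)
noncomputable def bb : RingQuot (TriRel k) := RingQuot.mkAlgHom k (TriRel k) (ι k 4)
noncomputable def cc : RingQuot (TriRel k) := RingQuot.mkAlgHom k (TriRel k) (ι k 5)

lemma orth' (i j : Fin 3) :
    RingQuot.mkAlgHom k (TriRel k) (ι k (Fin.castLE (by omega) i)) *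
      RingQuot.mkAlgHom k (TriRel k) (ι k (Fin.castLE (by omega) j)) =
    if i = j then RingQuot.mkAlgHom k (TriRel k) (ι k (Fin.castLE (by omega) i)) else 0 := by
  have h := RingQuot.mkAlgHom_rel k (TriRel.orth (k := k) i j)
  rw [_root_.map_mul] at h
  rw [h]
  split <;> simp

@[simp] lemma e11 : e1 k * e1 k = e1 k := by simpa [e1] using orth' k 0 0
@[simp] lemma e12 : e1 k * e2 k = 0 := by simpa [e1, e2] using orth' k 0 1
@[simp] lemma e13 : e1 k * e3 k = 0 := by simpa [e1, e3] using orth' k 0 2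
@[simp] lemma e21 : e2 k * e1 k = 0 := by simpa [e1, e2] using orth' k 1 0
@[simp] lemma e22 : e2 k * e2 k = e2 k := by simpa [e2] using orth' k 1 1
@[simp] lemma e23 : e2 k * e3 k = 0 := by simpa [e2, e3] using orth' k 1 2
@[simp] lemma e31 : e3 k * e1 k = 0 := by simpa [e1, e3] using orth' k 2 0
@[simp] lemma e32 : e3 k * e2 k = 0 := by simpa [e2, e3] using orth' k 2 1
@[simp] lemma e33 : e3 k * e3 k = e3 k := by simpa [e3] using orth' k 2 2

lemma sum_e : e1 k + e2 k + e3 k = 1 := by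
  have h := RingQuot.mkAlgHom_rel k (TriRel.sum_idem (k := k))
  simpa [e1, e2, e3, map_add] using h

lemma aEq : aa k = e2 k * aa k * e1 k := by
  have h := RingQuot.mkAlgHom_rel k (TriRel.alpha (k := k))
  simpa [e1, e2, aa, _root_.map_mul] using h
lemma bEq : bb k = e3 k * bb k * e2 k := by
  have h := RingQuot.mkAlgHom_rel k (TriRel.beta (k := k))
  simpa [e2, e3, bb, _root_.map_mul] using h
lemma cEq : cc k = e3 k * cc k * e1 k := by
  have h := RingQuot.mkAlgHom_rel k (TriRel.gamma (k := k))
  simpa [e1, e3, cc, _root_.map_mul] using h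
@[simp] lemma ba0 : bb k * aa k = 0 := by
  have h := RingQuot.mkAlgHom_rel k (TriRel.ba (k := k))
  simpa [aa, bb, _root_.map_mul] using h

-- side multiplications
@[simp] lemma ae1 : aa k * e1 k = aa k := by
  conv_lhs => rw [aEq k]
  rw [mul_assoc, e11]; exact (aEq k).symm
@[simp] lemma ae2 : aa k * e2 k = 0 := by
  conv_lhs => rw [aEq k]
  rw [mul_assoc, e12, mul_zero]
@[simp] lemma ae3 : aa k * e3 k = 0 := by
  conv_lhs => rw [aEq k]
  rw [mul_assoc, e13, mul_zero]
@[simp] lemma be1 : bb k * e1 k = 0 := by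
  conv_lhs => rw [bEq k]
  rw [mul_assoc, e21, mul_zero]
@[simp] lemma be2 : bb k * e2 k = bb k := by
  conv_lhs => rw [bEq k]
  rw [mul_assoc, e22]; exact (bEq k).symm
@[simp] lemma be3 : bb k * e3 k = 0 := by
  conv_lhs => rw [bEq k]
  rw [mul_assoc, e23, mul_zero]
@[simp] lemma ce1 : cc k * e1 k = cc k := by
  conv_lhs => rw [cEq k]
  rw [mul_assoc, e11]; exact (cEq k).symm
@[simp] lemma ce2 : cc k * e2 k = 0 := by
  conv_lhs => rw [cEq k]
  rw [mul_assoc, e12, mul_zero]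
@[simp] lemma ce3 : cc k * e3 k = 0 := by
  conv_lhs => rw [cEq k]
  rw [mul_assoc, e13, mul_zero]

@[simp] lemma e1a : e1 k * aa k = 0 := by
  conv_lhs => rw [aEq k]
  simp only [← mul_assoc]; rw [e12, zero_mul, zero_mul]
@[simp] lemma e2a : e2 k * aa k = aa k := by
  conv_lhs => rw [aEq k]
  simp only [← mul_assoc]; rw [e22]; exact (aEq k).symm
@[simp] lemma e3a : e3 k * aa k = 0 := by
  conv_lhs => rw [aEq k]
  simp only [← mul_assoc]; rw [e32, zero_mul, zero_mul]
@[simp] lemma e1b : e1 k * bb k = 0 := by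
  conv_lhs => rw [bEq k]
  simp only [← mul_assoc]; rw [e13, zero_mul, zero_mul]
@[simp] lemma e2b : e2 k * bb k = 0 := by
  conv_lhs => rw [bEq k]
  simp only [← mul_assoc]; rw [e23, zero_mul, zero_mul]
@[simp] lemma e3b : e3 k * bb k = bb k := by
  conv_lhs => rw [bEq k]
  simp only [← mul_assoc]; rw [e33]; exact (bEq k).symm
@[simp] lemma e1c : e1 k * cc k = 0 := by
  conv_lhs => rw [cEq k]
  simp only [← mul_assoc]; rw [e13, zero_mul, zero_mul]
@[simp] lemma e2c : e2 k * cc k = 0 := by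
  conv_lhs => rw [cEq k]
  simp only [← mul_assoc]; rw [e23, zero_mul, zero_mul]
@[simp] lemma e3c : e3 k * cc k = cc k := by
  conv_lhs => rw [cEq k]
  simp only [← mul_assoc]; rw [e33]; exact (cEq k).symm

@[simp] lemma aa0 : aa k * aa k = 0 := by
  nth_rewrite 2 [aEq k]
  simp only [← mul_assoc]; rw [ae2, zero_mul, zero_mul]
@[simp] lemma ab0 : aa k * bb k = 0 := by
  nth_rewrite 1 [bEq k]
  simp only [← mul_assoc]; rw [ae3, zero_mul, zero_mul]
@[simp] lemma ac0 : aa k * cc k = 0 := by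
  nth_rewrite 1 [cEq k]
  simp only [← mul_assoc]; rw [ae3, zero_mul, zero_mul]
@[simp] lemma bb0 : bb k * bb k = 0 := by
  nth_rewrite 2 [bEq k]
  simp only [← mul_assoc]; rw [be3, zero_mul, zero_mul]
@[simp] lemma bc0 : bb k * cc k = 0 := by
  nth_rewrite 1 [cEq k]
  simp only [← mul_assoc]; rw [be3, zero_mul, zero_mul]
@[simp] lemma ca0 : cc k * aa k = 0 := by
  nth_rewrite 1 [aEq k]
  simp only [← mul_assoc]; rw [ce2, zero_mul, zero_mul]
@[simp] lemma cb0 : cc k * bb k = 0 := by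
  nth_rewrite 1 [bEq k]
  simp only [← mul_assoc]; rw [ce3, zero_mul, zero_mul]
@[simp] lemma cc0 : cc k * cc k = 0 := by
  nth_rewrite 2 [cEq k]
  simp only [← mul_assoc]; rw [ce3, zero_mul, zero_mul]


noncomputable def S : Submodule k (RingQuot (TriRel k)) :=
  Submodule.span k {e1 k, e2 k, e3 k, aa k, bb k, cc k}

lemma gen_mem_S : ∀ x ∈ ({e1 k, e2 k, e3 k, aa k, bb k, cc k} :
    Set (RingQuot (TriRel k))), x ∈ S k :=
  fun _ hx => Submodule.subset_span hx

lemma gen_mul_gen : ∀ x ∈ ({e1 k, e2 k, e3 k, aa k, bb k, cc k} :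
      Set (RingQuot (TriRel k))),
    ∀ y ∈ ({e1 k, e2 k, e3 k, aa k, bb k, cc k} : Set (RingQuot (TriRel k))),
    x * y ∈ S k := by
  intro x hx y hy
  simp only [Set.mem_insert_iff, Set.mem_singleton_iff] at hx hy
  rcases hx with rfl | rfl | rfl | rfl | rfl | rfl <;>
    rcases hy with rfl | rfl | rfl | rfl | rfl | rfl <;>
    simp only [e11, e12, e13, e21, e22, e23, e31, e32, e33,
      e1a, e2a, e3a, e1b, e2b, e3b, e1c, e2c, e3c,
      ae1, ae2, ae3, be1, be2, be3, ce1, ce2, ce3,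
      aa0, ab0, ac0, ba0, bb0, bc0, ca0, cb0, cc0] <;>
    first
      | exact zero_mem _
      | exact Submodule.subset_span (by simp)

lemma mul_mem_S : ∀ x ∈ S k, ∀ y ∈ S k, x * y ∈ S k := by
  intro x hx
  induction hx using Submodule.span_induction with
  | mem u hu =>
    intro y hy
    induction hy using Submodule.span_induction with
    | mem v hv => exact gen_mul_gen k u hu v hv
    | zero => simp
    | add y z _ _ h1 h2 => rw [mul_add]; exact add_mem h1 h2
    | smul t y _ h => rw [mul_smul_comm]; exact Submodule.smul_mem _ _ h
  | zero => intro y _; simp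
  | add x z _ _ h1 h2 => intro y hy; rw [add_mul]; exact add_mem (h1 y hy) (h2 y hy)
  | smul t x _ h => intro y hy; rw [smul_mul_assoc]; exact Submodule.smul_mem _ _ (h y hy)

lemma one_mem_S : (1 : RingQuot (TriRel k)) ∈ S k := by
  rw [← sum_e]
  exact add_mem (add_mem (Submodule.subset_span (by simp))
    (Submodule.subset_span (by simp))) (Submodule.subset_span (by simp))

lemma mem_S (x : RingQuot (TriRel k)) : x ∈ S k := by
  obtain ⟨y, rfl⟩ := RingQuot.mkAlgHom_surjective k (TriRel k) x
  induction y using FreeAlgebra.induction with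
  | grade0 r =>
    rw [AlgHom.commutes, Algebra.algebraMap_eq_smul_one]
    exact Submodule.smul_mem _ _ (one_mem_S k)
  | grade1 i =>
    fin_cases i
    · exact Submodule.subset_span (show e1 k ∈ _ by simp)
    · exact Submodule.subset_span (show e2 k ∈ _ by simp)
    · exact Submodule.subset_span (show e3 k ∈ _ by simp)
    · exact Submodule.subset_span (show aa k ∈ _ by simp)
    · exact Submodule.subset_span (show bb k ∈ _ by simp)
    · exact Submodule.subset_span (show cc k ∈ _ by simp)
  | mul x y hx hy => rw [_root_.map_mul]; exact mul_mem_S k _ hx _ hy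
  | add x y hx hy => rw [map_add]; exact add_mem hx hy

lemma corner_gen (u v w : RingQuot (TriRel k))
    (hbase : ∀ g ∈ ({e1 k, e2 k, e3 k, aa k, bb k, cc k} :
      Set (RingQuot (TriRel k))), ∃ t : k, u * g * v = t • w) :
    ∀ x : RingQuot (TriRel k), ∃ t : k, u * x * v = t • w := by
  intro x
  refine Submodule.span_induction
    (p := fun y _ => ∃ t : k, u * y * v = t • w) hbase ⟨0, by simp⟩ ?_ ?_ (mem_S k x)
  · rintro y z _ _ ⟨s, hs⟩ ⟨t, ht⟩
    exact ⟨s + t, by rw [mul_add, add_mul, hs, ht, add_smul]⟩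
  · rintro r y _ ⟨s, hs⟩
    exact ⟨r * s, by rw [mul_smul_comm, smul_mul_assoc, hs, smul_smul]⟩


abbrev MM := Matrix (Fin 3) (Fin 3) k × Matrix (Fin 3) (Fin 3) k

noncomputable def gfun : Fin 6 → MM k := fun i =>
  if i = 0 then (Matrix.single 0 0 1, Matrix.single 0 0 1)
  else if i = 1 then (Matrix.single 1 1 1, Matrix.single 1 1 1)
  else if i = 2 then (Matrix.single 2 2 1, Matrix.single 2 2 1)
  else if i = 3 then (Matrix.single 1 0 1, 0)
  else if i = 4 then (0, Matrix.single 2 1 1)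
  else (Matrix.single 2 0 1, Matrix.single 2 0 1)

lemma castLE0 (h : (3:ℕ) ≤ 6) : Fin.castLE h (0 : Fin 3) = (0 : Fin 6) := rfl
lemma castLE1 (h : (3:ℕ) ≤ 6) : Fin.castLE h (1 : Fin 3) = (1 : Fin 6) := rfl
lemma castLE2 (h : (3:ℕ) ≤ 6) : Fin.castLE h (2 : Fin 3) = (2 : Fin 6) := rfl
lemma gfun0 : gfun k 0 = (Matrix.single 0 0 1, Matrix.single 0 0 1) := rfl
lemma gfun1 : gfun k 1 = (Matrix.single 1 1 1, Matrix.single 1 1 1) := rfl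
lemma gfun2 : gfun k 2 = (Matrix.single 2 2 1, Matrix.single 2 2 1) := rfl
lemma gfun3 : gfun k 3 = (Matrix.single 1 0 1, 0) := rfl
lemma gfun4 : gfun k 4 = (0, Matrix.single 2 1 1) := rfl
lemma gfun5 : gfun k 5 = (Matrix.single 2 0 1, Matrix.single 2 0 1) := rfl

lemma castLE0' (h : (3:ℕ) ≤ 6) (h0 : (0:ℕ) < 3) : Fin.castLE h ⟨0, h0⟩ = (0 : Fin 6) := rfl
lemma castLE1' (h : (3:ℕ) ≤ 6) (h0 : (1:ℕ) < 3) : Fin.castLE h ⟨1, h0⟩ = (1 : Fin 6) := rfl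
lemma castLE2' (h : (3:ℕ) ≤ 6) (h0 : (2:ℕ) < 3) : Fin.castLE h ⟨2, h0⟩ = (2 : Fin 6) := rfl

lemma F_resp : ∀ ⦃x y : FreeAlgebra k (Fin 6)⦄, TriRel k x y →
    (FreeAlgebra.lift k (gfun k)) x = (FreeAlgebra.lift k (gfun k)) y := by
  intro x y r
  cases r with
  | orth i j =>
    fin_cases i <;> fin_cases j <;>
      · simp only [_root_.map_mul, map_zero, lift_ι_apply, castLE0, castLE1, castLE2,
          castLE0', castLE1', castLE2', apply_ite (FreeAlgebra.lift k (gfun k)),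
          gfun0, gfun1, gfun2, gfun3, gfun4, gfun5]
        refine Prod.ext ?_ ?_ <;>
          simp [Matrix.single, Matrix.mul_apply, Fin.sum_univ_three, ← Matrix.ext_iff] <;>
          (intro i j; fin_cases i <;> fin_cases j <;> simp)
  | sum_idem =>
    simp only [map_add, _root_.map_one, lift_ι_apply, gfun0, gfun1, gfun2]
    refine Prod.ext ?_ ?_ <;>
      simp [Matrix.single, Matrix.one_apply, ← Matrix.ext_iff] <;>
      (intro i j; fin_cases i <;> fin_cases j <;> simp)
  | alpha =>
    simp only [_root_.map_mul, lift_ι_apply, gfun0, gfun1, gfun3]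
    refine Prod.ext ?_ ?_ <;>
      simp [Matrix.single, Matrix.mul_apply, Fin.sum_univ_three, ← Matrix.ext_iff] <;>
      (intro i j; fin_cases i <;> fin_cases j <;> simp)
  | beta =>
    simp only [_root_.map_mul, lift_ι_apply, gfun1, gfun2, gfun4]
    refine Prod.ext ?_ ?_ <;>
      simp [Matrix.single, Matrix.mul_apply, Fin.sum_univ_three, ← Matrix.ext_iff] <;>
      (intro i j; fin_cases i <;> fin_cases j <;> simp)
  | gamma =>
    simp only [_root_.map_mul, lift_ι_apply, gfun0, gfun2, gfun5]
    refine Prod.ext ?_ ?_ <;>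
      simp [Matrix.single, Matrix.mul_apply, Fin.sum_univ_three, ← Matrix.ext_iff] <;>
      (intro i j; fin_cases i <;> fin_cases j <;> simp)
  | ba =>
    simp only [_root_.map_mul, map_zero, lift_ι_apply, gfun3, gfun4]
    refine Prod.ext ?_ ?_ <;>
      simp [Matrix.single, Matrix.mul_apply, Fin.sum_univ_three, ← Matrix.ext_iff] <;>
      (intro i j; fin_cases i <;> fin_cases j <;> simp)

noncomputable def ρ : RingQuot (TriRel k) →ₐ[k] MM k :=
  RingQuot.liftAlgHom k ⟨FreeAlgebra.lift k (gfun k), F_resp k⟩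

lemma ρ_e1 : ρ k (e1 k) = gfun k 0 := by
  rw [e1, ρ, RingQuot.liftAlgHom_mkAlgHom_apply, lift_ι_apply]
lemma ρ_aa : ρ k (aa k) = gfun k 3 := by
  rw [aa, ρ, RingQuot.liftAlgHom_mkAlgHom_apply, lift_ι_apply]
lemma ρ_bb : ρ k (bb k) = gfun k 4 := by
  rw [bb, ρ, RingQuot.liftAlgHom_mkAlgHom_apply, lift_ι_apply]
lemma ρ_cc : ρ k (cc k) = gfun k 5 := by
  rw [cc, ρ, RingQuot.liftAlgHom_mkAlgHom_apply, lift_ι_apply]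

variable {k}

lemma smul_aa {t : k} (h : t • aa k = 0) : t = 0 := by
  have h2 : t • ρ k (aa k) = 0 := by rw [← _root_.map_smul, h, map_zero]
  rw [ρ_aa, gfun3] at h2
  have h3 := congrArg (fun m => m.1 1 0) h2
  simpa [Matrix.single] using h3

lemma smul_bb {t : k} (h : t • bb k = 0) : t = 0 := by
  have h2 : t • ρ k (bb k) = 0 := by rw [← _root_.map_smul, h, map_zero]
  rw [ρ_bb, gfun4] at h2
  have h3 := congrArg (fun m => m.2 2 1) h2
  simpa [Matrix.single] using h3

lemma smul_cc {t : k} (h : t • cc k = 0) : t = 0 := by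
  have h2 : t • ρ k (cc k) = 0 := by rw [← _root_.map_smul, h, map_zero]
  rw [ρ_cc, gfun5] at h2
  have h3 := congrArg (fun m => m.1 2 0) h2
  simpa [Matrix.single] using h3

lemma smul_aa_inj {s t : k} (h : s • aa k = t • aa k) : s = t := by
  have h2 : s • ρ k (aa k) = t • ρ k (aa k) := by
    rw [← _root_.map_smul, ← _root_.map_smul, h]
  rw [ρ_aa, gfun3] at h2
  have h3 := congrArg (fun m => m.1 1 0) h2
  simpa [Matrix.single] using h3

lemma smul_cc_inj {s t : k} (h : s • cc k = t • cc k) : s = t := by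
  have h2 : s • ρ k (cc k) = t • ρ k (cc k) := by
    rw [← _root_.map_smul, ← _root_.map_smul, h]
  rw [ρ_cc, gfun5] at h2
  have h3 := congrArg (fun m => m.1 2 0) h2
  simpa [Matrix.single] using h3

lemma bb_sum_zero {s t : k} (h : s • bb k + t • bb k = 0) : s + t = 0 := by
  have h2 : s • ρ k (bb k) + t • ρ k (bb k) = 0 := by
    rw [← _root_.map_smul, ← _root_.map_smul, ← map_add, h, map_zero]
  rw [ρ_bb, gfun4] at h2
  have h3 := congrArg (fun m => m.2 2 1) h2
  simpa [Matrix.single] using h3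

lemma e1_ne_zero : e1 k ≠ 0 := by
  intro h
  have h2 : ρ k (e1 k) = 0 := by rw [h, map_zero]
  rw [ρ_e1, gfun0] at h2
  have h3 := congrArg (fun m => m.1 0 0) h2
  simp [Matrix.single] at h3


lemma nmul (u v : RingQuot (TriRel k)) : -u * v = -(u * v) :=
  neg_mul (α := RingQuot (TriRel k)) u v
@[simp] lemma nba0 : -bb k * aa k = 0 := by rw [nmul, ba0, neg_zero]
@[simp] lemma nbe2 : -bb k * e2 k = -bb k := by rw [nmul, be2]

lemma e1_def : RingQuot.mkAlgHom k (TriRel k) (ι k 0) = e1 k := rfl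
lemma e2_def : RingQuot.mkAlgHom k (TriRel k) (ι k 1) = e2 k := rfl
lemma e3_def : RingQuot.mkAlgHom k (TriRel k) (ι k 2) = e3 k := rfl
lemma aa_def : RingQuot.mkAlgHom k (TriRel k) (ι k 3) = aa k := rfl
lemma bb_def : RingQuot.mkAlgHom k (TriRel k) (ι k 4) = bb k := rfl
lemma cc_def : RingQuot.mkAlgHom k (TriRel k) (ι k 5) = cc k := rfl

lemma shape_entry {f : Matrix (Fin 3) (Fin 3) (RingQuot (TriRel k))}
    (h : Matrix.diagonal ![e1 k, e2 k, e3 k] * f * Matrix.diagonal ![e1 k, e2 k, e3 k] = f)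
    (i j : Fin 3) :
    ![e1 k, e2 k, e3 k] i * f i j * ![e1 k, e2 k, e3 k] j = f i j := by
  conv_rhs => rw [← h]
  fin_cases i <;> fin_cases j <;>
    simp [Matrix.mul_apply, Fin.sum_univ_three, Matrix.diagonal_apply]

lemma base_corner (i j : Fin 3) :
    ∀ g ∈ ({e1 k, e2 k, e3 k, aa k, bb k, cc k} : Set (RingQuot (TriRel k))),
      ∃ t : k, ![e1 k, e2 k, e3 k] i * g * ![e1 k, e2 k, e3 k] j =
        t • (!![e1 k, 0, 0; aa k, e2 k, 0; cc k, bb k, e3 k] i j) := by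
  rintro g hg
  simp only [Set.mem_insert_iff, Set.mem_singleton_iff] at hg
  fin_cases i <;> fin_cases j <;>
    rcases hg with rfl | rfl | rfl | rfl | rfl | rfl <;>
    first
      | (refine ⟨1, ?_⟩; simp; done)
      | (refine ⟨0, ?_⟩; simp; done)

lemma corner (f : Matrix (Fin 3) (Fin 3) (RingQuot (TriRel k)))
    (h : Matrix.diagonal ![e1 k, e2 k, e3 k] * f * Matrix.diagonal ![e1 k, e2 k, e3 k] = f)
    (i j : Fin 3) :
    ∃ t : k, f i j = t • (!![e1 k, 0, 0; aa k, e2 k, 0; cc k, bb k, e3 k] i j) := by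
  obtain ⟨t, ht⟩ := corner_gen k _ _ _ (base_corner i j) (f i j)
  exact ⟨t, by rw [← shape_entry (k := k) h i j, ht]⟩

end TriAux

open TriAux

theorem cones_not_isomorphic (h2 : (2 : k) ≠ 0) :
    letI Λ := RingQuot (TriRel k)
    letI e₁ : Λ := RingQuot.mkAlgHom k (TriRel k) (ι k 0)
    letI e₂ : Λ := RingQuot.mkAlgHom k (TriRel k) (ι k 1)
    letI e₃ : Λ := RingQuot.mkAlgHom k (TriRel k) (ι k 2)
    letI a : Λ := RingQuot.mkAlgHom k (TriRel k) (ι k 3)  -- α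
    letI b : Λ := RingQuot.mkAlgHom k (TriRel k) (ι k 4)  -- β
    letI c : Λ := RingQuot.mkAlgHom k (TriRel k) (ι k 5)  -- γ
    letI d : Matrix (Fin 3) (Fin 3) Λ := !![0, 0, 0; a, 0, 0; c, b, 0]
    letI d' : Matrix (Fin 3) (Fin 3) Λ := !![0, 0, 0; a, 0, 0; c, -b, 0]
    letI idm : Matrix (Fin 3) (Fin 3) Λ := Matrix.diagonal ![e₁, e₂, e₃]
    -- d and d' are differentials
    (d * d = 0 ∧ d' * d' = 0) ∧
    -- C and C' are not isomorphic as differential modules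
    ¬ (∃ f g : Matrix (Fin 3) (Fin 3) Λ,
        idm * f * idm = f ∧ idm * g * idm = g ∧
        f * g = idm ∧ g * f = idm ∧
        f * d = d' * f) := by
  simp only [e1_def, e2_def, e3_def, aa_def, bb_def, cc_def]
  refine ⟨⟨?_, ?_⟩, ?_⟩
  · ext i j
    fin_cases i <;> fin_cases j <;>
      simp [Matrix.mul_apply, Fin.sum_univ_three]
  · ext i j
    fin_cases i <;> fin_cases j <;>
      simp [Matrix.mul_apply, Fin.sum_univ_three, neg_mul]
  · rintro ⟨f, g, hf, hg, hfg, hgf, hcomm⟩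
    obtain ⟨x, hx⟩ := corner f hf 0 0
    obtain ⟨y, hy⟩ := corner f hf 1 1
    obtain ⟨z, hz⟩ := corner f hf 2 2
    obtain ⟨p, hp⟩ := corner f hf 1 0
    obtain ⟨r, hr⟩ := corner f hf 2 1
    obtain ⟨t12, h12⟩ := corner f hf 1 2
    obtain ⟨t01, h01⟩ := corner f hf 0 1
    obtain ⟨g01, hg01⟩ := corner g hg 0 1
    obtain ⟨g02, hg02⟩ := corner g hg 0 2
    simp only [Matrix.cons_val_zero, Matrix.cons_val_one, Matrix.head_cons, Matrix.cons_val_two,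
      Matrix.tail_cons, Matrix.cons_val', Matrix.empty_val', Matrix.cons_val_fin_one,
      smul_zero, Matrix.of_apply] at hx hy hz hp hr h12 h01 hg01 hg02
    -- equation (1,0): y = x
    have E10 := congrFun (congrFun hcomm 1) 0
    simp only [Matrix.mul_apply, Fin.sum_univ_three] at E10
    simp [hx, hy, h12, smul_mul_assoc, mul_smul_comm, Matrix.vecHead, Matrix.vecTail] at E10
    -- equation (2,1): z = -y
    have E21 := congrFun (congrFun hcomm 2) 1
    simp only [Matrix.mul_apply, Fin.sum_univ_three] at E21
    simp [hy, hz, h01, smul_mul_assoc, mul_smul_comm, Matrix.vecHead, Matrix.vecTail] at E21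
    -- equation (2,0): z = x
    have E20 := congrFun (congrFun hcomm 2) 0
    simp only [Matrix.mul_apply, Fin.sum_univ_three] at E20
    simp [hx, hz, hp, hr, smul_mul_assoc, mul_smul_comm, Matrix.vecHead, Matrix.vecTail] at E20
    -- extract scalar equations
    have hyx : y = x := smul_aa_inj E10
    have hzx : z = x := smul_cc_inj E20
    have hzy : z + y = 0 := bb_sum_zero (add_eq_zero_iff_eq_neg.mpr E21)
    rw [hzx, hyx] at hzy
    have hx0 : x = 0 := by
      have h2x : 2 * x = 0 := by rw [two_mul]; exact hzy
      exact (mul_eq_zero.mp h2x).resolve_left h2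
    rw [hx0, zero_smul] at hx
    have E00 := congrFun (congrFun hgf 0) 0
    simp only [Matrix.mul_apply, Fin.sum_univ_three] at E00
    simp [hg01, hg02, hx, Matrix.diagonal_apply] at E00
    exact e1_ne_zero E00.symm
end
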